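/- For every k ∈ ℕ and every dyadic pair (ℓ,r) ∈ BS_n, the matrix M^(k)_{ℓ..r} defined by the binary recursion can be written as a signed sum ∑_{(sq,σ)∈S} σ·M^(0)_{sq} over a multiset S of pairs (sq,σ) with sq an increasing sequence ℓ = i_0 < i_1 < ... < i_h = r and σ ∈ {−1,+1}, such that |S| ≤ (r−ℓ)^{2k} and every sequence in S has length h ≤ k·log₂(r−ℓ) + 1. -/

import Mathlib

open Finset Matrix

/-- `(ℓ, r)` is a dyadic interval with right endpoint at most `n`. -/
def IsDyadic (n ℓ r : ℕ) : Prop :=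
  ∃ i t : ℕ, ℓ = i * 2 ^ t ∧ r = ℓ + 2 ^ t ∧ r ≤ n

/-- Given level-0 matrices `A`, the matrix associated to an increasing sequence
`sq = (i₀, i₁, …, i_h)`: the ordered product `∏_{j=1}^h A_{i_{j-1}..i_j}`. -/
noncomputable def seqProd {w : ℕ} (A : ℕ → ℕ → Matrix (Fin w) (Fin w) ℝ)
    (sq : List ℕ) : Matrix (Fin w) (Fin w) ℝ :=
  ((sq.zip sq.tail).map fun p => A p.1 p.2).prod

private lemma seqProd_cons_cons {w : ℕ} (A : ℕ → ℕ → Matrix (Fin w) (Fin w) ℝ)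
    (a b : ℕ) (l : List ℕ) :
    seqProd A (a :: b :: l) = A a b * seqProd A (b :: l) := by
  simp [seqProd]

private lemma seqProd_append {w : ℕ} (A : ℕ → ℕ → Matrix (Fin w) (Fin w) ℝ) :
    ∀ (l₁ : List ℕ) (m : ℕ) (t : List ℕ), l₁.getLast? = some m →
      seqProd A (l₁ ++ t) = seqProd A l₁ * seqProd A (m :: t)
  | [], m, t, h => by simp at h
  | [a], m, t, h => by
      simp only [List.getLast?_singleton, Option.some_inj] at h
      subst h
      simp [seqProd]
  | a :: b :: l, m, t, h => by
      rw [List.getLast?_cons_cons] at h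
      have ih := seqProd_append A (b :: l) m t h
      rw [show ((a :: b :: l) ++ t) = a :: b :: (l ++ t) from rfl,
        seqProd_cons_cons, show (b :: (l ++ t)) = ((b :: l) ++ t) from rfl, ih,
        seqProd_cons_cons, mul_assoc]

private lemma combine_props {ℓ m r : ℕ} (hmr : m < r) (l₁ l₂ : List ℕ)
    (hc1 : l₁.Chain' (· < ·)) (h1h : l₁.head? = some ℓ) (h1l : l₁.getLast? = some m)
    (hc2 : l₂.Chain' (· < ·)) (h2h : l₂.head? = some m) (h2l : l₂.getLast? = some r) :
    (l₁ ++ l₂.tail).Chain' (· < ·) ∧ (l₁ ++ l₂.tail).head? = some ℓ ∧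
      (l₁ ++ l₂.tail).getLast? = some r ∧ l₂ = m :: l₂.tail ∧
      (l₁ ++ l₂.tail).length - 1 = (l₁.length - 1) + (l₂.length - 1) := by
  rcases l₂ with _ | ⟨a, t⟩
  · simp at h2h
  rcases l₁ with _ | ⟨c, s⟩
  · simp at h1h
  simp only [List.head?_cons, Option.some_inj] at h2h h1h
  obtain rfl : m = a := h2h.symm
  obtain rfl : ℓ = c := h1h.symm
  rcases t with _ | ⟨b, t⟩
  · simp only [List.getLast?_singleton, Option.some_inj] at h2l
    omega
  have htail : (m :: b :: t).tail = b :: t := rfl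
  refine ⟨?_, ?_, ?_, rfl, ?_⟩
  · rw [htail, List.Chain', List.isChain_append]
    refine ⟨hc1, List.IsChain.tail hc2, ?_⟩
    intro x hx y hy
    rw [h1l] at hx
    simp only [Option.mem_def, Option.some_inj] at hx hy
    subst hx
    simp only [List.head?_cons, Option.some_inj] at hy
    subst hy
    exact (List.isChain_cons_cons.mp hc2).1
  · rfl
  · rw [htail, List.getLast?_append]
    simp only [List.getLast?_cons_cons] at h2l ⊢
    rw [h2l]; rfl
  · simp [List.length_append]

private noncomputable def msum {w : ℕ} (A : ℕ → ℕ → Matrix (Fin w) (Fin w) ℝ) :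
    Multiset (List ℕ × ℝ) →+ Matrix (Fin w) (Fin w) ℝ where
  toFun S := (S.map fun p => p.2 • seqProd A p.1).sum
  map_zero' := rfl
  map_add' a b := by simp

private lemma msum_negmap {w : ℕ} (A : ℕ → ℕ → Matrix (Fin w) (Fin w) ℝ)
    (L : Multiset (List ℕ × ℝ)) :
    msum A (L.map fun x => (x.1, -x.2)) = - msum A L := by
  show (Multiset.map _ (Multiset.map _ L)).sum = -(Multiset.map _ L).sum
  rw [Multiset.map_map]
  have h : ((fun p : List ℕ × ℝ => p.2 • seqProd A p.1) ∘ fun x : List ℕ × ℝ => (x.1, -x.2))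
      = fun x : List ℕ × ℝ => -(x.2 • seqProd A x.1) := by
    funext x; simp [neg_smul]
  rw [h, show (fun x : List ℕ × ℝ => -(x.2 • seqProd A x.1))
      = (Neg.neg ∘ fun x : List ℕ × ℝ => x.2 • seqProd A x.1) from rfl,
    ← Multiset.map_map, Multiset.sum_map_neg']

private lemma singleton_case {w : ℕ} (Mk : ℕ → ℕ → ℕ → Matrix (Fin w) (Fin w) ℝ)
    (k ℓ r : ℕ) (hlt : ℓ < r) (heq : Mk k ℓ r = Mk 0 ℓ r) :
    ∃ S : Multiset (List ℕ × ℝ),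
      (∀ p ∈ S, p.2 = 1 ∨ p.2 = -1) ∧
      (∀ p ∈ S, p.1.Chain' (· < ·) ∧ p.1.head? = some ℓ ∧ p.1.getLast? = some r) ∧
      Mk k ℓ r = (S.map fun p => p.2 • seqProd (Mk 0) p.1).sum ∧
      S.card ≤ (r - ℓ) ^ (2 * k) ∧
      ∀ p ∈ S, p.1.length - 1 ≤ k * Nat.log 2 (r - ℓ) + 1 := by
  refine ⟨{([ℓ, r], 1)}, ?_, ?_, ?_, ?_, ?_⟩
  · intro p hp
    rw [Multiset.mem_singleton] at hp
    subst hp; left; rfl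
  · intro p hp
    rw [Multiset.mem_singleton] at hp
    subst hp
    refine ⟨?_, rfl, rfl⟩
    simp [List.Chain', List.isChain_cons_cons, hlt]
  · rw [heq]
    simp [seqProd]
  · have h1 : 1 ≤ (r - ℓ) ^ (2 * k) := Nat.one_le_pow _ _ (by omega)
    simpa using h1
  · intro p hp
    rw [Multiset.mem_singleton] at hp
    subst hp
    simp

/-- Lemma 3.8 (expansion): `M^(k)_{ℓ..r}` is a signed sum of at most `(r−ℓ)^{2k}`
products `M^(0)_{sq}` over increasing sequences from `ℓ` to `r` of length at most
`k·log₂(r−ℓ) + 1`. -/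
theorem stmt_10 (w n : ℕ) (M : ℕ → Matrix (Fin w) (Fin w) ℝ)
    (Mk : ℕ → ℕ → ℕ → Matrix (Fin w) (Fin w) ℝ)
    (hbase : ∀ k ℓ r : ℕ, r = ℓ + 1 → Mk k ℓ r = M r)
    (hrec : ∀ k ℓ r : ℕ, IsDyadic n ℓ r → 1 < r - ℓ →
      Mk k ℓ r =
        (∑ p ∈ Finset.HasAntidiagonal.antidiagonal k, Mk p.1 ℓ ((ℓ + r) / 2) * Mk p.2 ((ℓ + r) / 2) r) -
          (if k = 0 then 0 else
            ∑ p ∈ Finset.HasAntidiagonal.antidiagonal (k - 1),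
              Mk p.1 ℓ ((ℓ + r) / 2) * Mk p.2 ((ℓ + r) / 2) r))
    (k ℓ r : ℕ) (hd : IsDyadic n ℓ r) :
    ∃ S : Multiset (List ℕ × ℝ),
      (∀ p ∈ S, p.2 = 1 ∨ p.2 = -1) ∧
      (∀ p ∈ S, p.1.Chain' (· < ·) ∧ p.1.head? = some ℓ ∧ p.1.getLast? = some r) ∧
      Mk k ℓ r = (S.map fun p => p.2 • seqProd (Mk 0) p.1).sum ∧
      S.card ≤ (r - ℓ) ^ (2 * k) ∧
      ∀ p ∈ S, p.1.length - 1 ≤ k * Nat.log 2 (r - ℓ) + 1 := by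
  obtain ⟨i0, t, hℓ, hr, hn⟩ := hd
  induction t generalizing k ℓ r i0 with
  | zero =>
    rw [pow_zero] at hr
    refine singleton_case Mk k ℓ r (by omega) ?_
    rw [hbase k ℓ r hr, hbase 0 ℓ r hr]
  | succ t ih =>
    have hp : 0 < 2 ^ t := Nat.pow_pos (by norm_num)
    have h2 : 2 ^ (t + 1) = 2 ^ t + 2 ^ t := by rw [pow_succ]; omega
    rcases Nat.eq_zero_or_pos k with hk | hk
    · subst hk
      exact singleton_case Mk 0 ℓ r (by omega) rfl
    set m := ℓ + 2 ^ t with hm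
    have hmr : m < r := by omega
    have hℓm : ℓ < m := by omega
    have hdy : IsDyadic n ℓ r := ⟨i0, t + 1, hℓ, hr, hn⟩
    have hmid : (ℓ + r) / 2 = m := by omega
    have hmℓ : m - ℓ = 2 ^ t := by omega
    have hrm : r - m = 2 ^ t := by omega
    have hrℓ : r - ℓ = 2 ^ (t + 1) := by omega
    choose SL hSL1 hSL2 hSL3 hSL4 hSL5 using
      fun i : ℕ => ih i ℓ m (2 * i0) (by rw [hℓ, pow_succ]; ring) rfl (by omega)
    choose SR hSR1 hSR2 hSR3 hSR4 hSR5 using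
      fun j : ℕ => ih j m r (2 * i0 + 1) (by rw [hm, hℓ, pow_succ]; ring) (by omega) hn
    set comb : ℕ → ℕ → Multiset (List ℕ × ℝ) := fun i j =>
      (SL i).bind fun p => (SR j).map fun q => (p.1 ++ q.1.tail, p.2 * q.2) with hcomb
    set S : Multiset (List ℕ × ℝ) :=
      (∑ ij ∈ Finset.HasAntidiagonal.antidiagonal k, comb ij.1 ij.2) +
        ∑ ij ∈ Finset.HasAntidiagonal.antidiagonal (k - 1), (comb ij.1 ij.2).map (fun x => (x.1, -x.2))
      with hS
    have hmemS : ∀ x ∈ S, ∃ (i j : ℕ) (p q : List ℕ × ℝ) (ε : ℝ),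
        ((i + j = k ∧ ε = 1) ∨ (i + j = k - 1 ∧ ε = -1)) ∧ p ∈ SL i ∧ q ∈ SR j ∧
        x.1 = p.1 ++ q.1.tail ∧ x.2 = ε * (p.2 * q.2) := by
      intro x hx
      rw [hS] at hx
      rcases Multiset.mem_add.mp hx with hx | hx
      · obtain ⟨ij, hij, hx⟩ := Multiset.mem_sum.mp hx
        obtain ⟨p, hp', hx⟩ := Multiset.mem_bind.mp hx
        obtain ⟨q, hq', hx⟩ := Multiset.mem_map.mp hx
        exact ⟨ij.1, ij.2, p, q, 1, Or.inl ⟨Finset.HasAntidiagonal.mem_antidiagonal.mp hij, rfl⟩, hp', hq',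
          by rw [← hx], by rw [← hx]; simp⟩
      · obtain ⟨ij, hij, hx⟩ := Multiset.mem_sum.mp hx
        obtain ⟨y, hy, hx⟩ := Multiset.mem_map.mp hx
        obtain ⟨p, hp', hy2⟩ := Multiset.mem_bind.mp hy
        obtain ⟨q, hq', hy3⟩ := Multiset.mem_map.mp hy2
        exact ⟨ij.1, ij.2, p, q, -1, Or.inr ⟨Finset.HasAntidiagonal.mem_antidiagonal.mp hij, rfl⟩, hp', hq',
          by rw [← hx, ← hy3], by rw [← hx, ← hy3]; simp⟩
    have hqcons : ∀ (j : ℕ) (q : List ℕ × ℝ), q ∈ SR j → q.1 = m :: q.1.tail := by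
      intro j q hq
      have h := (hSR2 j q hq).2.1
      rcases hq1 : q.1 with _ | ⟨a, u⟩
      · rw [hq1] at h; simp at h
      · rw [hq1] at h
        simp only [List.head?_cons, Option.some_inj] at h
        subst h; rfl
    refine ⟨S, ?_, ?_, ?_, ?_, ?_⟩
    · -- signs
      intro x hx
      obtain ⟨i, j, p, q, ε, hε, hp', hq', _, hx2⟩ := hmemS x hx
      rcases hSL1 i p hp' with h | h <;> rcases hSR1 j q hq' with h' | h' <;>
        rcases hε with ⟨_, rfl⟩ | ⟨_, rfl⟩ <;> rw [hx2, h, h'] <;> norm_num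
    · -- chain / head / last
      intro x hx
      obtain ⟨i, j, p, q, ε, hε, hp', hq', hx1, _⟩ := hmemS x hx
      obtain ⟨hc1, hh1, hl1⟩ := hSL2 i p hp'
      obtain ⟨hc2, hh2, hl2⟩ := hSR2 j q hq'
      obtain ⟨hA, hB, hC, _, _⟩ := combine_props hmr p.1 q.1 hc1 hh1 hl1 hc2 hh2 hl2
      rw [hx1]
      exact ⟨hA, hB, hC⟩
    · -- the sum identity
      have hc1 : ∀ i j : ℕ, msum (Mk 0) (comb i j) = Mk i ℓ m * Mk j m r := by
        intro i j
        show ((comb i j).map fun p => p.2 • seqProd (Mk 0) p.1).sum = _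
        rw [hcomb]
        simp only
        rw [Multiset.map_bind, Multiset.sum_bind]
        simp only [Multiset.map_map, Function.comp]
        rw [hSL3 i, hSR3 j, ← Multiset.sum_map_mul_right]
        refine congrArg Multiset.sum (Multiset.map_congr rfl ?_)
        intro p hp'
        rw [← Multiset.sum_map_mul_left]
        refine congrArg Multiset.sum (Multiset.map_congr rfl ?_)
        intro q hq'
        have hql := hqcons j q hq'
        rw [seqProd_append (Mk 0) p.1 m q.1.tail (hSL2 i p hp').2.2, ← smul_mul_smul_comm]
        conv_rhs => rw [hql]
      have frec := hrec k ℓ r hdy (by omega)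
      rw [if_neg (by omega), hmid] at frec
      rw [frec]
      show _ = msum (Mk 0) S
      rw [hS, map_add, map_sum (msum (Mk 0)), map_sum (msum (Mk 0))]
      have e1 : ∑ ij ∈ Finset.HasAntidiagonal.antidiagonal k, msum (Mk 0) (comb ij.1 ij.2)
          = ∑ ij ∈ Finset.HasAntidiagonal.antidiagonal k, Mk ij.1 ℓ m * Mk ij.2 m r :=
        Finset.sum_congr rfl fun ij _ => hc1 ij.1 ij.2
      have e2 : ∑ ij ∈ Finset.HasAntidiagonal.antidiagonal (k - 1),
            msum (Mk 0) ((comb ij.1 ij.2).map fun x => (x.1, -x.2))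
          = ∑ ij ∈ Finset.HasAntidiagonal.antidiagonal (k - 1), -(Mk ij.1 ℓ m * Mk ij.2 m r) :=
        Finset.sum_congr rfl fun ij _ => by rw [msum_negmap, hc1 ij.1 ij.2]
      rw [e1, e2, Finset.sum_neg_distrib, ← sub_eq_add_neg]
    · -- cardinality
      have hcard : ∀ i j : ℕ, i + j ≤ k →
          Multiset.card (comb i j) ≤ (2 ^ t) ^ (2 * k) := by
        intro i j hij
        have h1 : Multiset.card (comb i j)
            = Multiset.card (SL i) * Multiset.card (SR j) := by
          rw [hcomb]
          simp only [Multiset.card_bind, Function.comp, Multiset.card_map]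
          rw [Multiset.map_const', Multiset.sum_replicate, smul_eq_mul]
        rw [h1]
        have h4L := hSL4 i; rw [hmℓ] at h4L
        have h4R := hSR4 j; rw [hrm] at h4R
        calc Multiset.card (SL i) * Multiset.card (SR j)
            ≤ (2 ^ t) ^ (2 * i) * (2 ^ t) ^ (2 * j) := Nat.mul_le_mul h4L h4R
          _ = (2 ^ t) ^ (2 * (i + j)) := by rw [← pow_add]; ring_nf
          _ ≤ (2 ^ t) ^ (2 * k) :=
              Nat.pow_le_pow_right hp (by omega)
      have hSc : Multiset.card S
          = (∑ ij ∈ Finset.HasAntidiagonal.antidiagonal k, Multiset.card (comb ij.1 ij.2)) +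
            ∑ ij ∈ Finset.HasAntidiagonal.antidiagonal (k - 1), Multiset.card (comb ij.1 ij.2) := by
        rw [hS, Multiset.card_add, Multiset.card_sum, Multiset.card_sum]
        congr 1
        exact Finset.sum_congr rfl fun ij _ => Multiset.card_map _ _
      rw [hSc, hrℓ, pow_succ, mul_pow]
      have b1 : (∑ ij ∈ Finset.HasAntidiagonal.antidiagonal k, Multiset.card (comb ij.1 ij.2))
          ≤ (k + 1) * (2 ^ t) ^ (2 * k) := by
        have := Finset.sum_le_card_nsmul (Finset.HasAntidiagonal.antidiagonal k)
          (fun ij => Multiset.card (comb ij.1 ij.2)) ((2 ^ t) ^ (2 * k))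
          (fun ij hij => hcard ij.1 ij.2 (by rw [Finset.HasAntidiagonal.mem_antidiagonal.mp hij]))
        simpa [Finset.Nat.card_antidiagonal, smul_eq_mul] using this
      have b2 : (∑ ij ∈ Finset.HasAntidiagonal.antidiagonal (k - 1), Multiset.card (comb ij.1 ij.2))
          ≤ k * (2 ^ t) ^ (2 * k) := by
        have := Finset.sum_le_card_nsmul (Finset.HasAntidiagonal.antidiagonal (k - 1))
          (fun ij => Multiset.card (comb ij.1 ij.2)) ((2 ^ t) ^ (2 * k))
          (fun ij hij => hcard ij.1 ij.2 (by
            have := Finset.HasAntidiagonal.mem_antidiagonal.mp hij; omega))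
        have hk1 : (k - 1) + 1 = k := by omega
        simpa [Finset.Nat.card_antidiagonal, hk1, smul_eq_mul] using this
      have b3 : (2 * k + 1) ≤ 2 ^ (2 * k) := by
        have := Nat.lt_two_pow_self (n := 2 * k); omega
      calc (∑ ij ∈ Finset.HasAntidiagonal.antidiagonal k, Multiset.card (comb ij.1 ij.2)) +
            ∑ ij ∈ Finset.HasAntidiagonal.antidiagonal (k - 1), Multiset.card (comb ij.1 ij.2)
          ≤ (k + 1) * (2 ^ t) ^ (2 * k) + k * (2 ^ t) ^ (2 * k) := Nat.add_le_add b1 b2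
        _ = (2 * k + 1) * (2 ^ t) ^ (2 * k) := by ring
        _ ≤ 2 ^ (2 * k) * (2 ^ t) ^ (2 * k) := Nat.mul_le_mul_right _ b3
        _ = (2 ^ t) ^ (2 * k) * 2 ^ (2 * k) := by ring
    · -- lengths
      intro x hx
      obtain ⟨i, j, p, q, ε, hε, hp', hq', hx1, _⟩ := hmemS x hx
      obtain ⟨hc1, hh1, hl1⟩ := hSL2 i p hp'
      obtain ⟨hc2, hh2, hl2⟩ := hSR2 j q hq'
      obtain ⟨_, _, _, _, hlen⟩ := combine_props hmr p.1 q.1 hc1 hh1 hl1 hc2 hh2 hl2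
      have h5L := hSL5 i p hp'; rw [hmℓ, Nat.log_pow (by norm_num)] at h5L
      have h5R := hSR5 j q hq'; rw [hrm, Nat.log_pow (by norm_num)] at h5R
      rw [hrℓ, Nat.log_pow (by norm_num), hx1, hlen]
      have hij : i + j ≤ k := by rcases hε with ⟨h, _⟩ | ⟨h, _⟩ <;> omega
      calc (p.1.length - 1) + (q.1.length - 1)
          ≤ (i * t + 1) + (j * t + 1) := Nat.add_le_add h5L h5R
        _ = (i + j) * t + 2 := by ring
        _ ≤ k * t + 2 := Nat.add_le_add_right (Nat.mul_le_mul_right t hij) 2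
        _ ≤ k * t + (k + 1) := Nat.add_le_add_left (by omega) (k * t)
        _ = k * (t + 1) + 1 := by ring
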